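/- The entire function z ↦ (z + 1)·z^{−2}·sin(π z²/2) (that is, s(z)/(z−1) where s(z) = (z²−1)z^{−2} sin(π z²/2)) belongs to the Fock space: ∫_ℂ |(z+1) z^{−2} sin(π z²/2)|² e^{−π|z|²} dm(z) < ∞. -/

import Mathlib

open Complex Real MeasureTheory

lemma abs_sin_le_exp_abs_im (w : ℂ) :
    ‖Complex.sin w‖ ≤ Real.exp |w.im| := by
  rw [Complex.sin, norm_div, norm_mul, Complex.norm_I, mul_one, Complex.norm_two]
  have h1 : ‖Complex.exp (-w * Complex.I) - Complex.exp (w * Complex.I)‖ ≤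
      Real.exp w.im + Real.exp (-w.im) := by
    refine (norm_sub_le _ _).trans ?_
    rw [Complex.norm_exp, Complex.norm_exp]
    have h2 : (-w * Complex.I).re = w.im := by simp
    have h3 : (w * Complex.I).re = -w.im := by simp
    rw [h2, h3]
  have h4 : Real.exp w.im ≤ Real.exp |w.im| := Real.exp_le_exp.2 (le_abs_self _)
  have h5 : Real.exp (-w.im) ≤ Real.exp |w.im| := Real.exp_le_exp.2 (neg_le_abs _)
  linarith

lemma dom_integrable : Integrable (fun z : ℂ =>
    (45/16 : ℝ) * ((Real.exp (-(π/2) * (z.re - z.im)^2) +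
      Real.exp (-(π/2) * (z.re + z.im)^2)) * (1 + z.im^2)⁻¹)) := by
  have hπ : (0:ℝ) < π/2 := by positivity
  have hF : Integrable (fun p : ℝ × ℝ => Real.exp (-(π/2) * p.1 ^ 2) * (1 + p.2^2)⁻¹)
      (volume.prod volume) :=
    (integrable_exp_neg_mul_sq hπ).mul_prod integrable_inv_one_add_sq
  have h1 : Integrable (fun p : ℝ × ℝ => Real.exp (-(π/2) * (p.1 - p.2) ^ 2) * (1 + p.2^2)⁻¹)
      (volume.prod volume) :=
    ((measurePreserving_sub_prod volume volume).integrable_comp hF.aestronglyMeasurable).2 hF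
  have hmp : MeasurePreserving
      ((fun z : ℝ × ℝ => (z.1 - z.2, z.2)) ∘ Prod.map (id : ℝ → ℝ) (Neg.neg : ℝ → ℝ))
      (volume.prod volume) (volume.prod volume) :=
    (measurePreserving_sub_prod (volume : Measure ℝ) volume).comp
      ((MeasurePreserving.id volume).prod (Measure.measurePreserving_neg volume))
  have h2 : Integrable (fun p : ℝ × ℝ => Real.exp (-(π/2) * (p.1 + p.2) ^ 2) * (1 + p.2^2)⁻¹)
      (volume.prod volume) := by
    have h := (hmp.integrable_comp hF.aestronglyMeasurable).2 hF
    refine h.congr ?_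
    filter_upwards with p
    simp [Function.comp, Prod.map, sub_neg_eq_add, neg_sq]
  have hsum : Integrable (fun p : ℝ × ℝ =>
      (45/16 : ℝ) * ((Real.exp (-(π/2) * (p.1 - p.2)^2) +
        Real.exp (-(π/2) * (p.1 + p.2)^2)) * (1 + p.2^2)⁻¹)) (volume.prod volume) := by
    have := (h1.add h2).const_mul (45/16 : ℝ)
    refine this.congr ?_
    filter_upwards with p
    simp only [Pi.add_apply]
    ring
  rw [← Measure.volume_eq_prod] at hsum
  have h := (Complex.volume_preserving_equiv_real_prod.integrable_comp
    hsum.aestronglyMeasurable).2 hsum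
  refine h.congr ?_
  filter_upwards with z
  rfl

set_option maxHeartbeats 1000000 in
/-- The entire function z ↦ (z+1) z^{−2} sin(πz²/2), i.e. s(z)/(z−1), belongs to
the Fock space. -/
theorem s_div_z_sub_one_in_fock (t : ℂ → ℂ) (ht : Differentiable ℂ t)
    (ht_eq : ∀ z : ℂ, z ≠ 0 → t z = (z + 1) / z ^ 2 * Complex.sin (π * z ^ 2 / 2)) :
    Integrable (fun z : ℂ => ‖t z‖ ^ 2 * Real.exp (-π * ‖z‖ ^ 2)) := by
  have hcont : Continuous fun z : ℂ => ‖t z‖ ^ 2 * Real.exp (-π * ‖z‖ ^ 2) := by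
    have h1 : Continuous fun z : ℂ => ‖t z‖ :=
      continuous_norm.comp ht.continuous
    have h2 : Continuous fun z : ℂ => ‖z‖ := continuous_norm
    continuity
  rw [← integrableOn_univ]
  have hsplit : (Set.univ : Set ℂ) = Metric.closedBall 0 2 ∪ {z | 2 ≤ ‖z‖} := by
    ext z
    simp only [Set.mem_univ, Set.mem_union, Metric.mem_closedBall, Complex.dist_eq, sub_zero,
      Set.mem_setOf_eq, true_iff]
    exact le_total _ _
  rw [hsplit, integrableOn_union]
  constructor
  · exact ContinuousOn.integrableOn_compact (isCompact_closedBall 0 2) hcont.continuousOn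
  · have hmeas : MeasurableSet {z : ℂ | 2 ≤ ‖z‖} :=
      (isClosed_le continuous_const continuous_norm).measurableSet
    refine Integrable.mono' dom_integrable.integrableOn hcont.aestronglyMeasurable.restrict ?_
    rw [ae_restrict_iff' hmeas]
    filter_upwards with z hz
    have hz0 : z ≠ 0 := by
      intro h
      rw [h, norm_zero] at hz
      norm_num at hz
    set A := ‖z‖ with hA
    set x := z.re
    set y := z.im
    have hA0 : (0:ℝ) < A := lt_of_lt_of_le (by norm_num) hz
    have hA2 : A^2 = x^2 + y^2 := by
      rw [hA, Complex.sq_norm, Complex.normSq_apply]; ring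
    -- imaginary part of π z² / 2
    have hcast : (↑π * z^2 / 2 : ℂ) = ((π/2 : ℝ) : ℂ) * z^2 := by push_cast; ring
    have him : (↑π * z^2 / 2 : ℂ).im = π * x * y := by
      rw [hcast]
      simp [pow_two, Complex.mul_im, Complex.mul_re]
      ring
    have hsin : ‖Complex.sin (↑π * z^2 / 2)‖ ≤ Real.exp (π * |x| * |y|) := by
      refine (abs_sin_le_exp_abs_im _).trans ?_
      rw [him, abs_mul, abs_mul, abs_of_pos Real.pi_pos]
    -- bound |t z|
    have hz1 : ‖z + 1‖ ≤ (3/2) * A := by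
      calc ‖z + 1‖ ≤ ‖z‖ + ‖1‖ := norm_add_le _ _
        _ = A + 1 := by rw [norm_one]
        _ ≤ (3/2) * A := by linarith
    have habs_t : ‖t z‖ ≤ (3/2) / A * Real.exp (π * |x| * |y|) := by
      rw [ht_eq z hz0, norm_mul, norm_div, norm_pow]
      have h1 : ‖z + 1‖ / A ^ 2 ≤ (3/2) / A := by
        rw [div_le_div_iff₀ (by positivity) hA0]
        calc ‖z + 1‖ * A ≤ ((3/2) * A) * A := by
              exact mul_le_mul_of_nonneg_right hz1 hA0.le
          _ = 3/2 * A^2 := by ring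
      exact mul_le_mul h1 hsin (norm_nonneg _) (by positivity)
    -- the full pointwise estimate
    have hexp : Real.exp (π * |x| * |y|) ^ 2 * Real.exp (-π * A ^ 2) =
        Real.exp (-π * (|x| - |y|)^2) := by
      rw [pow_two, ← Real.exp_add, ← Real.exp_add]
      congr 1
      rw [hA2, ← _root_.sq_abs x, ← _root_.sq_abs y]
      ring
    have key : ‖t z‖ ^ 2 * Real.exp (-π * A ^ 2) ≤
        (9/4) / A^2 * Real.exp (-π * (|x| - |y|)^2) := by
      calc ‖t z‖ ^ 2 * Real.exp (-π * A ^ 2)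
          ≤ ((3/2) / A * Real.exp (π * |x| * |y|))^2 * Real.exp (-π * A ^ 2) := by
            apply mul_le_mul_of_nonneg_right _ (Real.exp_pos _).le
            exact pow_le_pow_left₀ (norm_nonneg _) habs_t 2
        _ = (9/4) / A^2 * (Real.exp (π * |x| * |y|) ^ 2 * Real.exp (-π * A ^ 2)) := by
            field_simp; ring
        _ = (9/4) / A^2 * Real.exp (-π * (|x| - |y|)^2) := by rw [hexp]
    -- coefficient bound
    have hy2 : y^2 ≤ A^2 := by nlinarith [sq_nonneg x]
    have h4A : (4:ℝ) ≤ A^2 := by nlinarith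
    have hcoef : (9/4) / A^2 ≤ (45/16) * (1 + y^2)⁻¹ := by
      rw [← div_eq_mul_inv, div_le_div_iff₀ (by positivity) (by positivity)]
      nlinarith
    -- exponential bound
    have hEbound : Real.exp (-π * (|x| - |y|)^2) ≤
        Real.exp (-(π/2) * (x - y)^2) + Real.exp (-(π/2) * (x + y)^2) := by
      rcases le_or_gt 0 (x * y) with hxy | hxy
      · have habs : |x| * |y| = x * y := by rw [← abs_mul, _root_.abs_of_nonneg hxy]
        have h1 : Real.exp (-π * (|x| - |y|)^2) ≤ Real.exp (-(π/2) * (x - y)^2) := by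
          apply Real.exp_le_exp.2
          have heq : (|x| - |y|)^2 = (x - y)^2 := by
            linear_combination _root_.sq_abs x + _root_.sq_abs y - 2 * habs
          rw [heq]
          nlinarith [sq_nonneg (x - y), Real.pi_pos]
        linarith [(Real.exp_pos (-(π/2) * (x + y)^2)).le]
      · have habs : |x| * |y| = -(x * y) := by rw [← abs_mul, _root_.abs_of_neg hxy]
        have h1 : Real.exp (-π * (|x| - |y|)^2) ≤ Real.exp (-(π/2) * (x + y)^2) := by
          apply Real.exp_le_exp.2
          have heq : (|x| - |y|)^2 = (x + y)^2 := by
            linear_combination _root_.sq_abs x + _root_.sq_abs y - 2 * habs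
          rw [heq]
          nlinarith [sq_nonneg (x + y), Real.pi_pos]
        linarith [(Real.exp_pos (-(π/2) * (x - y)^2)).le]
    rw [Real.norm_of_nonneg (mul_nonneg (pow_nonneg (norm_nonneg _) 2) (Real.exp_pos _).le)]
    calc ‖t z‖ ^ 2 * Real.exp (-π * A ^ 2)
        ≤ (9/4) / A^2 * Real.exp (-π * (|x| - |y|)^2) := key
      _ ≤ ((45/16) * (1 + y^2)⁻¹) *
          (Real.exp (-(π/2) * (x - y)^2) + Real.exp (-(π/2) * (x + y)^2)) := by
          exact mul_le_mul hcoef hEbound (Real.exp_pos _).le (by positivity)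
      _ = (45/16) * ((Real.exp (-(π/2) * (x - y)^2) +
          Real.exp (-(π/2) * (x + y)^2)) * (1 + y^2)⁻¹) := by ring
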